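/- (Rosendal) Every K_σ equivalence relation on a Polish space is Borel reducible to E_{ℓ∞}: if X is a Polish space and E is an equivalence relation on X such that {(x, y) ∈ X × X : x E y} is σ-compact, then there exists a Borel map f : X → ℝ^ℕ such that for all x, y ∈ X, x E y if and only if sup_n |f(x)_n − f(y)_n| < ∞. -/

import Mathlib

open Set

namespace RosendalAux

variable {X : Type*} [TopologicalSpace X]

/-- Composition of two relations on `X`, viewed as subsets of `X × X`. -/
def rcomp (S T : Set (X × X)) : Set (X × X) := {p | ∃ z, (p.1, z) ∈ S ∧ (z, p.2) ∈ T}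

lemma isCompact_rcomp [T2Space X] {S T : Set (X × X)} (hS : IsCompact S) (hT : IsCompact T) :
    IsCompact (rcomp S T) := by
  have heq : rcomp S T =
      (fun q : (X × X) × (X × X) => (q.1.1, q.2.2)) ''
      ((S ×ˢ T) ∩ {q | q.1.2 = q.2.1}) := by
    ext p
    constructor
    · rintro ⟨z, h1, h2⟩
      exact ⟨((p.1, z), (z, p.2)), ⟨⟨h1, h2⟩, rfl⟩, rfl⟩
    · rintro ⟨q, ⟨⟨h1, h2⟩, he⟩, rfl⟩
      refine ⟨q.1.2, by simpa using h1, ?_⟩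
      rw [he]; simpa using h2
  rw [heq]
  exact ((hS.prod hT).inter_right (isClosed_eq (by fun_prop) (by fun_prop))).image (by fun_prop)

end RosendalAux

open RosendalAux

/-- Rosendal: every `K_σ` equivalence relation on a Polish space is Borel reducible
to `E_{ℓ∞}` on `ℝ^ℕ`. -/
theorem ksigma_equivalence_borel_reducible_to_ell_infty
    {X : Type*} [TopologicalSpace X] [PolishSpace X]
    [MeasurableSpace X] [BorelSpace X]
    (E : X → X → Prop) (hE : Equivalence E)
    (hK : IsSigmaCompact {p : X × X | E p.1 p.2}) :
    ∃ f : X → (ℕ → ℝ), Measurable f ∧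
      ∀ x y, E x y ↔ ∃ C : ℝ, ∀ n, |f x n - f y n| ≤ C := by
  classical
  rcases isEmpty_or_nonempty X with hempty | hne
  · exact ⟨fun _ _ => 0, measurable_const, fun x y => (IsEmpty.false x).elim⟩
  letI := TopologicalSpace.upgradeIsCompletelyMetrizable X
  obtain ⟨K, hKc, hKU⟩ := hK
  -- the diagonal is a closed subset of the σ-compact set E, hence σ-compact
  have hdiagsub : Set.diagonal X ⊆ {p : X × X | E p.1 p.2} := by
    rintro ⟨a, b⟩ (hab : a = b)
    subst hab; exact hE.refl a
  have hdiagK : IsSigmaCompact (Set.diagonal X) :=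
    IsSigmaCompact.of_isClosed_subset ⟨K, hKc, hKU⟩ isClosed_diagonal hdiagsub
  obtain ⟨D, hDc, hDU⟩ := hdiagK
  -- basic compact symmetric pieces
  set B : ℕ → Set (X × X) := fun n => K n ∪ Prod.swap '' K n ∪ D n with hB
  have hBc : ∀ n, IsCompact (B n) := fun n =>
    ((hKc n).union ((hKc n).image continuous_swap)).union (hDc n)
  have hKE : ∀ n, K n ⊆ {p : X × X | E p.1 p.2} := fun n => hKU ▸ subset_iUnion K n
  have hDdiag : ∀ n, D n ⊆ Set.diagonal X := fun n => hDU ▸ subset_iUnion D n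
  have hBE : ∀ n, B n ⊆ {p : X × X | E p.1 p.2} := by
    rintro n ⟨a, b⟩ hab
    rcases hab with (h | ⟨⟨c, d⟩, hcd, hswap⟩) | h
    · exact hKE n h
    · cases hswap
      exact hE.symm (hKE n hcd)
    · exact hdiagsub (hDdiag n h)
  have hBsymm : ∀ n a b, (a, b) ∈ B n → (b, a) ∈ B n := by
    intro n a b hab
    rcases hab with (h | ⟨⟨c, d⟩, hcd, hswap⟩) | h
    · exact Or.inl (Or.inr ⟨(a, b), h, rfl⟩)
    · cases hswap
      exact Or.inl (Or.inl hcd)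
    · have : a = b := hDdiag n h
      subst this; exact Or.inr h
  -- the increasing compact relations L n
  set L : ℕ → Set (X × X) := fun n =>
    Nat.rec (B 0) (fun n Ln => Ln ∪ rcomp Ln Ln ∪ B (n + 1)) n with hL
  have hL0 : L 0 = B 0 := rfl
  have hLs : ∀ n, L (n + 1) = L n ∪ rcomp (L n) (L n) ∪ B (n + 1) := fun n => rfl
  have hLc : ∀ n, IsCompact (L n) := by
    intro n
    induction n with
    | zero => exact hBc 0
    | succ n ih => exact (ih.union (isCompact_rcomp ih ih)).union (hBc (n + 1))
  have hLE : ∀ n, L n ⊆ {p : X × X | E p.1 p.2} := by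
    intro n
    induction n with
    | zero => exact hBE 0
    | succ n ih =>
      rintro ⟨a, b⟩ hp
      rw [hLs n] at hp
      rcases hp with (h | ⟨z, h1, h2⟩) | h
      · exact ih h
      · have e1 : E a z := ih h1
        have e2 : E z b := ih h2
        exact hE.trans e1 e2
      · exact hBE (n + 1) h
  have hLsymm : ∀ n a b, (a, b) ∈ L n → (b, a) ∈ L n := by
    intro n
    induction n with
    | zero => exact hBsymm 0
    | succ n ih =>
      intro a b hab
      rw [hLs n] at hab
      rw [hLs n]
      rcases hab with (h | ⟨z, h1, h2⟩) | h
      · exact Or.inl (Or.inl (ih a b h))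
      · exact Or.inl (Or.inr ⟨z, ih z b h2, ih a z h1⟩)
      · exact Or.inr (hBsymm (n + 1) a b h)
  have hLstep : ∀ n, L n ⊆ L (n + 1) := fun n => (subset_union_left.trans subset_union_left)
  have hLmono : Monotone L := monotone_nat_of_le_succ hLstep
  have hLcomp : ∀ n, rcomp (L n) (L n) ⊆ L (n + 1) := fun n =>
    subset_union_right.trans subset_union_left
  have hLcover : ∀ x y, E x y → ∃ n, (x, y) ∈ L n := by
    intro x y hxy
    have : (x, y) ∈ ⋃ n, K n := hKU ▸ hxy
    obtain ⟨n, hn⟩ := mem_iUnion.1 this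
    refine ⟨n, ?_⟩
    have : K n ⊆ L n := by
      intro p hp
      cases n with
      | zero => exact Or.inl (Or.inl hp)
      | succ m => exact Or.inr (Or.inl (Or.inl hp))
    exact this hn
  have hLrefl : ∀ x, ∃ n, (x, x) ∈ L n := by
    intro x
    have : (x, x) ∈ ⋃ n, D n := hDU ▸ (rfl : x = x)
    obtain ⟨n, hn⟩ := mem_iUnion.1 this
    refine ⟨n, ?_⟩
    have : D n ⊆ L n := by
      intro p hp
      cases n with
      | zero => exact Or.inr hp
      | succ m => exact Or.inr (Or.inr hp)
    exact this hn
  -- countable family of closed balls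
  have hsep : TopologicalSpace.SeparableSpace X := inferInstance
  set u : ℕ → X := TopologicalSpace.denseSeq X with hu
  have hdense : DenseRange u := TopologicalSpace.denseRange_denseSeq X
  set r : ℕ → ℝ := fun q => 1 / (q + 1) with hr
  have hrpos : ∀ q, 0 < r q := fun q => by positivity
  set V : ℕ × ℕ → Set X := fun iq => Metric.closedBall (u iq.1) (r iq.2) with hV
  have hVclosed : ∀ iq, IsClosed (V iq) := fun iq => Metric.isClosed_closedBall
  -- the sets A iq k and the truncated distance functions d
  set A : ℕ × ℕ → ℕ → Set X := fun iq k => {x | ∃ v ∈ V iq, (x, v) ∈ L k} with hA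
  have hAcompact : ∀ iq k, IsCompact (A iq k) := by
    intro iq k
    have heq : A iq k = Prod.fst '' (L k ∩ (univ ×ˢ V iq)) := by
      ext x
      constructor
      · rintro ⟨v, hv, hxv⟩
        exact ⟨(x, v), ⟨hxv, mem_univ _, hv⟩, rfl⟩
      · rintro ⟨⟨a, b⟩, ⟨hab, -, hb⟩, rfl⟩
        exact ⟨b, hb, hab⟩
    rw [heq]
    exact ((hLc k).inter_right (isClosed_univ.prod (hVclosed iq))).image continuous_fst
  have hAmeas : ∀ iq k, MeasurableSet (A iq k) := fun iq k => (hAcompact iq k).measurableSet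
  have hAmono : ∀ iq, Monotone (A iq) := by
    intro iq k k' hk x ⟨v, hv, hxv⟩
    exact ⟨v, hv, hLmono hk hxv⟩
  set dd : ℕ × ℕ → ℕ → X → ℕ := fun iq N x => sInf ({k | x ∈ A iq k} ∪ {N}) with hdd
  have hdle : ∀ iq N x, dd iq N x ≤ N := fun iq N x =>
    Nat.sInf_le (mem_union_right _ rfl)
  have hdleA : ∀ iq N x k, x ∈ A iq k → dd iq N x ≤ k := fun iq N x k hk =>
    Nat.sInf_le (mem_union_left _ hk)
  have hdmem : ∀ iq N x, dd iq N x < N → x ∈ A iq (dd iq N x) := by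
    intro iq N x hlt
    have hne : ({k | x ∈ A iq k} ∪ {N} : Set ℕ).Nonempty := ⟨N, mem_union_right _ rfl⟩
    have := Nat.sInf_mem hne
    rcases this with h | h
    · exact h
    · exact absurd h hlt.ne
  -- Lipschitz estimate along L m
  have hlip : ∀ iq N m x y, (x, y) ∈ L m → (dd iq N x : ℝ) ≤ dd iq N y + (m + 1) := by
    intro iq N m x y hxy
    rcases lt_or_ge (dd iq N y) N with hlt | hge
    · obtain ⟨v, hv, hyv⟩ := hdmem iq N y hlt
      set j := max m (dd iq N y) with hj
      have h1 : (x, y) ∈ L j := hLmono (le_max_left _ _) hxy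
      have h2 : (y, v) ∈ L j := hLmono (le_max_right _ _) hyv
      have h3 : (x, v) ∈ L (j + 1) := hLcomp j ⟨y, h1, h2⟩
      have h4 : dd iq N x ≤ j + 1 := hdleA iq N x (j + 1) ⟨v, hv, h3⟩
      have h5 : j + 1 ≤ dd iq N y + (m + 1) := by omega
      have : dd iq N x ≤ dd iq N y + (m + 1) := h4.trans h5
      exact_mod_cast this
    · have : dd iq N x ≤ dd iq N y + (m + 1) := (hdle iq N x).trans (by omega)
      exact_mod_cast this
  -- the reduction
  set c : (ℕ × ℕ) × ℕ ≃ ℕ := Denumerable.eqv ((ℕ × ℕ) × ℕ) with hc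
  set f : X → ℕ → ℝ := fun x n => ((dd (c.symm n).1 (c.symm n).2 x : ℕ) : ℝ) with hf
  -- measurability
  have hdlevel : ∀ iq N j, MeasurableSet {x | dd iq N x ≤ j} := by
    intro iq N j
    rcases lt_or_ge j N with hj | hj
    · have : {x | dd iq N x ≤ j} = A iq j := by
        ext x
        constructor
        · intro hx
          have hlt : dd iq N x < N := lt_of_le_of_lt hx hj
          exact hAmono iq hx (hdmem iq N x hlt)
        · intro hx
          exact hdleA iq N x j hx
      rw [this]; exact hAmeas iq j
    · have : {x | dd iq N x ≤ j} = univ := by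
        ext x; simp only [mem_setOf_eq, mem_univ, iff_true]
        exact (hdle iq N x).trans hj
      rw [this]; exact MeasurableSet.univ
  have hdmeas : ∀ iq N, Measurable (fun x => dd iq N x) := by
    intro iq N
    apply measurable_to_countable'
    intro j
    cases j with
    | zero =>
      have : (fun x => dd iq N x) ⁻¹' {0} = {x | dd iq N x ≤ 0} := by
        ext x; simp [Nat.le_zero]
      rw [this]; exact hdlevel iq N 0
    | succ j =>
      have : (fun x => dd iq N x) ⁻¹' {j + 1} =
          {x | dd iq N x ≤ j + 1} ∩ {x | dd iq N x ≤ j}ᶜ := by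
        ext x
        simp only [mem_preimage, mem_singleton_iff, mem_inter_iff, mem_setOf_eq, mem_compl_iff]
        omega
      rw [this]
      exact (hdlevel iq N (j + 1)).inter (hdlevel iq N j).compl
  have hfmeas : Measurable f := by
    apply measurable_pi_lambda
    intro n
    exact measurable_from_top.comp (hdmeas (c.symm n).1 (c.symm n).2)
  refine ⟨f, hfmeas, ?_⟩
  intro x y
  constructor
  · -- E x y → bounded differences
    intro hxy
    obtain ⟨m, hm⟩ := hLcover x y hxy
    have hm' : (y, x) ∈ L m := hLsymm m x y hm
    refine ⟨m + 1, fun n => ?_⟩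
    rw [abs_sub_le_iff]
    constructor
    · have := hlip (c.symm n).1 (c.symm n).2 m x y hm
      simp only [hf]
      push_cast at this ⊢
      linarith
    · have := hlip (c.symm n).1 (c.symm n).2 m y x hm'
      simp only [hf]
      push_cast at this ⊢
      linarith
  · -- bounded differences → E x y
    rintro ⟨C, hC⟩
    by_contra hxy
    obtain ⟨n0, hn0⟩ := hLrefl x
    set N : ℕ := n0 + ⌈C⌉₊ + 1 with hN
    -- the compact section of L N at y
    set S : Set X := {v | (y, v) ∈ L N} with hS
    have hScompact : IsCompact S := by
      have heq : S = Prod.snd '' (L N ∩ ({y} ×ˢ univ)) := by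
        ext v
        constructor
        · intro hv
          exact ⟨(y, v), ⟨hv, rfl, mem_univ _⟩, rfl⟩
        · rintro ⟨⟨a, b⟩, ⟨hab, (ha : a = y), -⟩, rfl⟩
          subst ha; exact hab
      rw [heq]
      exact ((hLc N).inter_right ((isClosed_singleton).prod isClosed_univ)).image continuous_snd
    have hxS : x ∉ S := by
      intro hxmem
      exact hxy (hE.symm (hLE N hxmem))
    obtain ⟨ε, hεpos, hball⟩ :=
      Metric.isOpen_iff.1 hScompact.isClosed.isOpen_compl x hxS
    obtain ⟨q, hq⟩ := exists_nat_one_div_lt (show (0 : ℝ) < ε / 2 by linarith)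
    have hrq : r q < ε / 2 := by
      simpa [hr] using hq
    obtain ⟨i, hi⟩ := Metric.denseRange_iff.1 hdense x (r q) (hrpos q)
    set iq : ℕ × ℕ := (i, q) with hiq
    have hxV : x ∈ V iq := by
      simp only [hV, Metric.mem_closedBall]
      exact le_of_lt (by simpa [dist_comm] using hi)
    have hVS : ∀ v ∈ V iq, v ∉ S := by
      intro v hv hvS
      have h1 : dist v (u i) ≤ r q := by simpa [hV, Metric.mem_closedBall] using hv
      have h2 : dist (u i) x ≤ r q := le_of_lt (by simpa [dist_comm] using hi)
      have : dist v x < ε := by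
        calc dist v x ≤ dist v (u i) + dist (u i) x := dist_triangle _ _ _
        _ ≤ r q + r q := add_le_add h1 h2
        _ < ε := by linarith
      exact hball (by simpa [Metric.mem_ball] using this) hvS
    have hdx : dd iq N x ≤ n0 := hdleA iq N x n0 ⟨x, hxV, hn0⟩
    have hdy : dd iq N y = N := by
      refine le_antisymm (hdle iq N y) ?_
      by_contra hlt
      push_neg at hlt
      have hlt' : dd iq N y < N := hlt
      obtain ⟨v, hv, hyv⟩ := hdmem iq N y hlt'
      exact hVS v hv (hLmono (le_of_lt hlt') hyv)
    set n : ℕ := c (iq, N) with hn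
    have hcn : c.symm n = (iq, N) := Equiv.symm_apply_apply c (iq, N)
    have hfx : f x n = (dd iq N x : ℝ) := by
      simp only [hf, hcn]
    have hfy : f y n = (N : ℝ) := by
      simp only [hf, hcn, hdy]
    have hbound := hC n
    rw [abs_sub_le_iff] at hbound
    have h1 : (N : ℝ) - dd iq N x ≤ C := by
      rw [hfx, hfy] at hbound
      linarith [hbound.2]
    have h2 : (dd iq N x : ℝ) ≤ n0 := by exact_mod_cast hdx
    have h3 : C ≤ ⌈C⌉₊ := Nat.le_ceil C
    have h4 : (N : ℝ) = n0 + ⌈C⌉₊ + 1 := by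
      rw [hN]; push_cast; ring
    linarith
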